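/- Let K ≥ 2, k ≥ 1, and let a,b,c ∈ Σ_K with liminf_{i→∞} ρ(σ_K^i(a),σ_K^i(b)) ≥ K^{−k+1}. Let [p,q] be a compact subinterval of [0,1] and let N ∈ 𝓜([p,q]). Set x = Φ_{N,c}(a) and y = Φ_{N,c}(b). Then for every ε with 0 < ε ≤ K^{−k+1}, the density spectrum μ({i ≥ 0 : ρ(σ_K^i(x),σ_K^i(y)) < ε}) equals [p,q]; in particular (x,y) ∈ D_{σ_K}([p,q]). -/

import Mathlib

open Filter Set MeasureTheory Topology TopologicalSpace

noncomputable section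

/-- The symbolic space `Σ_K` on `K` symbols: sequences `ℕ → Fin K`. -/
def SymbSp (K : ℕ) : Type := ℕ → Fin K

namespace SymbSp

variable {K : ℕ}

theorem exists_ne {x y : SymbSp K} (h : ¬x = y) : ∃ i, x i ≠ y i := by
  by_contra hc
  push_neg at hc
  exact h (funext hc)

open Classical in
/-- The metric `ρ(x,y) = K^{-δ(x,y)}` on `Σ_K`. -/
def sdist (x y : SymbSp K) : ℝ :=
  if h : x = y then 0 else ((K : ℝ))⁻¹ ^ Nat.find (exists_ne h)

theorem sdist_self (x : SymbSp K) : sdist x x = 0 := by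
  unfold sdist
  exact dif_pos rfl

open Classical in
theorem sdist_eq {x y : SymbSp K} (h : ¬x = y) :
    sdist x y = ((K : ℝ))⁻¹ ^ Nat.find (exists_ne h) := by
  unfold sdist
  exact dif_neg h

theorem sdist_nonneg' (x y : SymbSp K) : 0 ≤ sdist x y := by
  unfold sdist
  split
  · exact le_rfl
  · positivity

theorem inv_cast_le_one (K : ℕ) : ((K : ℝ))⁻¹ ≤ 1 := by
  rcases Nat.eq_zero_or_pos K with h | h
  · simp [h]
  · exact inv_le_one_of_one_le₀ (by exact_mod_cast h)

open Classical in
theorem eq_of_lt_find {x y : SymbSp K} (h : ¬x = y) {i : ℕ}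
    (hi : i < Nat.find (exists_ne h)) : x i = y i :=
  not_not.mp (Nat.find_min (exists_ne h) hi)

open Classical in
theorem sdist_le_of_agree {x y : SymbSp K} {n : ℕ} (h : ∀ i < n, x i = y i) :
    sdist x y ≤ ((K : ℝ))⁻¹ ^ n := by
  by_cases hxy : x = y
  · rw [hxy, sdist_self]; positivity
  · rw [sdist_eq hxy]
    apply pow_le_pow_of_le_one (by positivity) (inv_cast_le_one K)
    rw [Nat.le_find_iff]
    intro m hm
    simp only [ne_eq, not_not]
    exact h m hm

open Classical in
theorem sdist_comm (x y :  SymbSp K) : sdist x y = sdist y x := by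
  by_cases h : x = y
  · rw [h]
  · rw [sdist_eq h, sdist_eq (fun hyx => h hyx.symm)]
    all_goals congr 1
    all_goals (exact le_antisymm (Nat.find_mono fun n hn => hn.symm) (Nat.find_mono fun n hn => hn.symm))

open Classical in
theorem sdist_le_max (x y z : SymbSp K) : sdist x z ≤ max (sdist x y) (sdist y z) := by
  by_cases hxz : x = z
  · rw [hxz, sdist_self]
    exact le_max_of_le_left (sdist_nonneg' _ _)
  by_cases hxy : x = y
  · rw [hxy]; exact le_max_right _ _
  by_cases hyz : y = z
  · rw [← hyz]; exact le_max_left _ _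
  rcases le_total (Nat.find (exists_ne hxy)) (Nat.find (exists_ne hyz)) with hle | hle
  · refine le_max_of_le_left ?_
    rw [sdist_eq hxy]
    exact sdist_le_of_agree fun i hi =>
      (eq_of_lt_find hxy hi).trans (eq_of_lt_find hyz (lt_of_lt_of_le hi hle))
  · refine le_max_of_le_right ?_
    rw [sdist_eq hyz]
    exact sdist_le_of_agree fun i hi =>
      (eq_of_lt_find hxy (lt_of_lt_of_le hi hle)).trans (eq_of_lt_find hyz hi)

theorem eq_of_sdist_eq_zero {x y : SymbSp K} (h : sdist x y = 0) : x = y := by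
  by_contra hxy
  rw [sdist_eq hxy] at h
  have hK : (0 : ℝ) < (K : ℝ) := by exact_mod_cast Fin.pos (x 0)
  exact absurd h (ne_of_gt (pow_pos (inv_pos.mpr hK) _))

instance : MetricSpace (SymbSp K) where
  dist := sdist
  dist_self := sdist_self
  dist_comm := sdist_comm
  dist_triangle x y z :=
    (sdist_le_max x y z).trans (max_le_add_of_nonneg (sdist_nonneg' _ _) (sdist_nonneg' _ _))
  eq_of_dist_eq_zero := fun h => eq_of_sdist_eq_zero h

instance : MeasurableSpace (SymbSp K) := borel _

instance : BorelSpace (SymbSp K) := ⟨rfl⟩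

instance : SeparableSpace (SymbSp K) := by
  obtain hK | hK | hK : K = 0 ∨ K = 1 ∨ 2 ≤ K := by omega
  · subst hK
    haveI : IsEmpty (SymbSp 0) := ⟨fun x => (x 0).elim0⟩
    exact ⟨⟨Set.univ, Set.countable_univ, dense_univ⟩⟩
  · subst hK
    haveI : Subsingleton (SymbSp 1) := ⟨fun x y => funext fun i => Subsingleton.elim _ _⟩
    exact ⟨⟨Set.univ, Set.countable_univ, dense_univ⟩⟩
  · refine ⟨⟨Set.range (fun w : (Σ n : ℕ, (Fin n → Fin K)) =>
      (fun i => if h : i < w.1 then w.2 ⟨i, h⟩ else ⟨0, by omega⟩ : SymbSp K)),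
      Set.countable_range _, ?_⟩⟩
    rw [Metric.dense_iff]
    intro x r hr
    obtain ⟨n, hn⟩ : ∃ n : ℕ, ((K : ℝ))⁻¹ ^ n < r :=
      exists_pow_lt_of_lt_one hr (inv_lt_one_of_one_lt₀ (by exact_mod_cast hK))
    refine ⟨(fun i => if h : i < n then x i else ⟨0, by omega⟩ : SymbSp K),
      ?_, ⟨⟨n, fun j => x j⟩, rfl⟩⟩
    refine Metric.mem_ball.mpr ?_
    exact lt_of_le_of_lt (sdist_le_of_agree fun i hi => dif_pos hi) hn

instance : SecondCountableTopology (SymbSp K) :=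
  UniformSpace.secondCountable_of_separable _

end SymbSp

/-- The shift map `σ_K` on `Σ_K`. -/
def shift (K : ℕ) : SymbSp K → SymbSp K := fun x i => x (i + 1)

end
noncomputable section DistChaos

variable {X : Type*} [MetricSpace X]

/-- The lower distributional function `F_{x,y}(ε)`. -/
def lowF (f : X → X) (x y : X) (ε : ℝ) : ℝ :=
  Filter.liminf (fun n : ℕ =>
    (((Finset.range n).filter fun i => dist (f^[i] x) (f^[i] y) < ε).card : ℝ) / n)
    Filter.atTop

/-- The upper distributional function `F*_{x,y}(ε)`. -/
def uppF (f : X → X) (x y : X) (ε : ℝ) : ℝ :=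
  Filter.limsup (fun n : ℕ =>
    (((Finset.range n).filter fun i => dist (f^[i] x) (f^[i] y) < ε).card : ℝ) / n)
    Filter.atTop

/-- The set `E_f([p,q])`. -/
def Eset (f : X → X) (p q : ℝ) : Set (X × X) :=
  {z | Filter.Tendsto (fun ε => lowF f z.1 z.2 ε) (nhdsWithin 0 (Set.Ioi 0)) (nhds p) ∧
       Filter.Tendsto (fun ε => uppF f z.1 z.2 ε) (nhdsWithin 0 (Set.Ioi 0)) (nhds q)}

/-- The set `D_f([p,q])`. -/
def Dset (f : X → X) (p q : ℝ) : Set (X × X) :=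
  {z | ∃ ε₀ > 0, ∀ ε : ℝ, 0 < ε → ε ≤ ε₀ →
        lowF f z.1 z.2 ε = p ∧ uppF f z.1 z.2 ε = q}

end DistChaos

noncomputable section

/-- `γ_N(n) = ζ_n(N) = #(N ∩ [0,n))`; on `N` this is the unique order preserving
bijection `N → ℕ`. -/
def gammaCount (N : Set ℕ) (n : ℕ) : ℕ := (N ∩ Set.Iio n).ncard

open Classical in
/-- The map `Φ_{N,a} : Σ_K → Σ_K`:
`(Φ_{N,a}(x))_i = a_{γ_N(i)}` for `i ∈ N` and `x_{γ_{Nᶜ}(i)}` for `i ∈ Nᶜ`. -/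
def Phi {K : ℕ} (N : Set ℕ) (a : SymbSp K) (x : SymbSp K) : SymbSp K :=
  fun i => if i ∈ N then a (gammaCount N i) else x (gammaCount Nᶜ i)

section Aux17b
open Filter Set

lemma shift_iter {K : ℕ} (i : ℕ) (z : SymbSp K) (j : ℕ) :
    (shift K)^[i] z j = z (j + i) := by
  induction i generalizing z with
  | zero => rfl
  | succ i ih =>
    rw [Function.iterate_succ, Function.comp_apply, ih]
    rfl

open Classical in
lemma symb_dist_lt_iff {K : ℕ} {u v : SymbSp K} {ε : ℝ} {m : ℕ}
    (hlt : ((K:ℝ))⁻¹ ^ m < ε) (hge : ∀ j < m, ε ≤ ((K:ℝ))⁻¹ ^ j) :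
    dist u v < ε ↔ ∀ j < m, u j = v j := by
  constructor
  · intro h j hj
    by_contra hne
    have huv : ¬ u = v := fun he => hne (congrFun he j)
    have hd : dist u v = ((K:ℝ))⁻¹ ^ (Nat.find (SymbSp.exists_ne huv)) := SymbSp.sdist_eq huv
    have hfind : Nat.find (SymbSp.exists_ne huv) ≤ j := Nat.find_min' _ hne
    have h3 := hge _ (lt_of_le_of_lt hfind hj)
    rw [hd] at h
    linarith
  · intro h
    calc dist u v ≤ ((K:ℝ))⁻¹ ^ m := SymbSp.sdist_le_of_agree h
    _ < ε := hlt
end Aux17b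

section Aux17

lemma ncard_inter_Iio' (A : Set ℕ) [DecidablePred (· ∈ A)] (n : ℕ) :
    (A ∩ Set.Iio n).ncard = ((Finset.range n).filter (· ∈ A)).card := by
  rw [← Set.ncard_coe_finset]
  congr 1
  ext i
  simp [Set.mem_Iio, and_comm]

lemma cntA_succ (A : Set ℕ) [DecidablePred (· ∈ A)] (n : ℕ) :
    ((Finset.range (n+1)).filter (· ∈ A)).card
      = ((Finset.range n).filter (· ∈ A)).card + (if n ∈ A then 1 else 0) := by
  rw [Finset.range_add_one, Finset.filter_insert]
  split
  · rw [Finset.card_insert_of_notMem (by simp)]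
  · simp

lemma cntA_le (A : Set ℕ) [DecidablePred (· ∈ A)] (n : ℕ) :
    ((Finset.range n).filter (· ∈ A)).card ≤ n := by
  calc ((Finset.range n).filter (· ∈ A)).card ≤ (Finset.range n).card :=
        Finset.card_filter_le _ _
    _ = n := Finset.card_range n

lemma cntA_mono (A : Set ℕ) [DecidablePred (· ∈ A)] {n n' : ℕ} (h : n ≤ n') :
    ((Finset.range n).filter (· ∈ A)).card ≤ ((Finset.range n').filter (· ∈ A)).card :=
  Finset.card_le_card (Finset.filter_subset_filter _ (by simpa using Finset.range_subset_range.mpr h))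

lemma mapClusterPt_atTop_iff_freq {f : ℕ → ℝ} {r : ℝ} :
    MapClusterPt r atTop f ↔ ∀ δ > 0, ∃ᶠ n in atTop, |f n - r| < δ := by
  rw [mapClusterPt_iff_frequently]
  constructor
  · intro h δ hδ
    have := h (Metric.ball r δ) (Metric.ball_mem_nhds r hδ)
    simpa [Real.dist_eq] using this
  · intro h s hs
    obtain ⟨δ, hδ, hsub⟩ := Metric.mem_nhds_iff.mp hs
    exact (h δ hδ).mono fun n hn => hsub (by simpa [Metric.mem_ball, Real.dist_eq] using hn)

lemma mapClusterPt_of_subseq {f : ℕ → ℝ} {u : ℕ → ℕ} {r : ℝ}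
    (hu : Tendsto u atTop atTop) (hfu : Tendsto (fun i => f (u i)) atTop (nhds r)) :
    MapClusterPt r atTop f := by
  rw [mapClusterPt_atTop_iff_freq]
  intro δ hδ
  rw [frequently_atTop]
  intro A
  have h1 : ∀ᶠ i in atTop, |f (u i) - r| < δ := by
    have := Metric.tendsto_nhds.mp hfu δ hδ
    simpa [Real.dist_eq] using this
  obtain ⟨i, hi1, hi2⟩ := (h1.and (hu.eventually_ge_atTop A)).exists
  exact ⟨u i, hi2, hi1⟩

lemma cluster_mem_Icc {f : ℕ → ℝ} {p q r : ℝ}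
    (hub : ∀ δ > 0, ∀ᶠ n in atTop, f n ≤ q + δ)
    (hlb : ∀ δ > 0, ∀ᶠ n in atTop, p - δ ≤ f n)
    (hr : MapClusterPt r atTop f) : r ∈ Set.Icc p q := by
  rw [mapClusterPt_atTop_iff_freq] at hr
  constructor
  · by_contra h
    push_neg at h
    have hδ : 0 < (p - r)/2 := by linarith
    obtain ⟨n, h1, h2⟩ := ((hr _ hδ).and_eventually (hlb _ hδ)).exists
    rw [abs_sub_lt_iff] at h1
    linarith [h1.1, h1.2]
  · by_contra h
    push_neg at h
    have hδ : 0 < (r - q)/2 := by linarith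
    obtain ⟨n, h1, h2⟩ := ((hr _ hδ).and_eventually (hub _ hδ)).exists
    rw [abs_sub_lt_iff] at h1
    linarith [h1.1, h1.2]

lemma cluster_of_cross {f : ℕ → ℝ} {r : ℝ}
    (hstep : ∀ δ > 0, ∀ᶠ n in atTop, |f (n+1) - f n| ≤ δ)
    (hlo : ∃ᶠ n in atTop, f n < r) (hhi : ∃ᶠ n in atTop, r < f n) :
    MapClusterPt r atTop f := by
  classical
  rw [mapClusterPt_atTop_iff_freq]
  intro δ hδ
  rw [frequently_atTop]
  intro A
  obtain ⟨M, hM⟩ := eventually_atTop.mp (hstep (δ/2) (by linarith))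
  obtain ⟨n₁, hn₁, hf1⟩ := frequently_atTop.mp hlo (max A M)
  obtain ⟨n₂, hn₂, hf2⟩ := frequently_atTop.mp hhi (n₁+1)
  have hex : ∃ j, r ≤ f (n₁ + j) := by
    refine ⟨n₂ - n₁, ?_⟩
    rw [Nat.add_sub_cancel' (by omega)]
    exact hf2.le
  set j := Nat.find hex with hjdef
  have hj : r ≤ f (n₁ + j) := Nat.find_spec hex
  have hj1 : 1 ≤ j := by
    rcases Nat.eq_zero_or_pos j with h | h
    · exfalso; rw [h] at hj; simp at hj; linarith
    · exact h
  have hprev : f (n₁ + j - 1) < r := by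
    have := Nat.find_min hex (show j - 1 < j by omega)
    push_neg at this
    have he : n₁ + (j-1) = n₁ + j - 1 := by omega
    rwa [he] at this
  refine ⟨n₁ + j, by omega, ?_⟩
  have hsb := hM (n₁ + j - 1) (by omega)
  have he : n₁ + j - 1 + 1 = n₁ + j := by omega
  rw [he] at hsb
  rw [abs_le] at hsb
  rw [abs_sub_lt_iff]
  constructor <;> linarith [hsb.1, hsb.2]

end Aux17

set_option maxHeartbeats 4000000 in
/-- Let `K ≥ 2`, `k ≥ 1`, and `a, b, c ∈ Σ_K` with
`liminf_i ρ(σ_K^i a, σ_K^i b) ≥ K^{−k+1}` (i.e. `(a,b)` is `K^{−k+1}`-distal).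
Let `[p,q] ⊆ [0,1]` and `N ∈ 𝓜([p,q])` (with maximal-interval endpoints `t`,
`d_{N,i} → ∞`, `e_{N,2i}/t_{2i+1} → q`, `e_{N,2i+1}/t_{2i+2} → p`).
Set `x = Φ_{N,c}(a)`, `y = Φ_{N,c}(b)`. Then for every `ε ∈ (0, K^{−k+1}]` the density
spectrum of `{i : ρ(σ_K^i x, σ_K^i y) < ε}` equals `[p,q]`; in particular
`(x,y) ∈ D_{σ_K}([p,q])`. -/
theorem statement_17 (K : ℕ) (hK : 2 ≤ K) (k : ℕ) (hk : 1 ≤ k)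
    (a b c : SymbSp K)
    (hab : (K : ℝ) ^ (1 - (k : ℤ)) ≤
      Filter.liminf (fun i : ℕ => dist ((shift K)^[i] a) ((shift K)^[i] b)) Filter.atTop)
    (p q : ℝ) (hp : 0 ≤ p) (hpq : p ≤ q) (hq : q ≤ 1)
    (N : Set ℕ) (t : ℕ → ℕ) (ht : StrictMono t)
    (hrep : N = {n | ∃ j : ℕ, t (2 * j) ≤ n ∧ n < t (2 * j + 1)})
    (hd : Filter.Tendsto (fun i : ℕ => t (i + 1) - t i) Filter.atTop Filter.atTop)
    (hto_q : Filter.Tendsto (fun i : ℕ =>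
        ((N ∩ Set.Iio (t (2 * i + 1))).ncard : ℝ) / t (2 * i + 1)) Filter.atTop (nhds q))
    (hto_p : Filter.Tendsto (fun i : ℕ =>
        ((N ∩ Set.Iio (t (2 * i + 2))).ncard : ℝ) / t (2 * i + 2)) Filter.atTop (nhds p)) :
    (∀ ε : ℝ, 0 < ε → ε ≤ (K : ℝ) ^ (1 - (k : ℤ)) →
      {r : ℝ | MapClusterPt r Filter.atTop (fun n : ℕ =>
        (({i : ℕ | dist ((shift K)^[i] (Phi N c a)) ((shift K)^[i] (Phi N c b)) < ε} ∩
            Set.Iio n).ncard : ℝ) / n)} = Set.Icc p q) ∧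
    (Phi N c a, Phi N c b) ∈ Dset (shift K) p q := by
  classical
  have hK0 : (0:ℝ) < K := by exact_mod_cast (show 0 < K by omega)
  have hK1 : (1:ℝ) < K := by exact_mod_cast (show 1 < K by omega)
  have hKinv0 : (0:ℝ) < (K:ℝ)⁻¹ := by positivity
  have hKinv1 : ((K:ℝ))⁻¹ < 1 := inv_lt_one_of_one_lt₀ hK1
  have hzpow : (K : ℝ) ^ (1 - (k:ℤ)) = ((K:ℝ))⁻¹ ^ (k-1) := by
    have h1 : (1 - (k:ℤ)) = -(((k-1:ℕ)):ℤ) := by push_cast; omega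
    rw [h1, zpow_neg, zpow_natCast, ← inv_pow]
  -- distality of (a, b)
  have hdistal : ∃ I₀ : ℕ, ∀ i, I₀ ≤ i → ∃ j, j < k ∧ a (i + j) ≠ b (i + j) := by
    have hlt : ((K:ℝ))⁻¹ ^ k < (K:ℝ) ^ (1 - (k:ℤ)) := by
      rw [hzpow]
      exact pow_lt_pow_right_of_lt_one₀ hKinv0 hKinv1 (by omega)
    have hbdd : Filter.IsBoundedUnder (· ≥ ·) Filter.atTop
        (fun i : ℕ => dist ((shift K)^[i] a) ((shift K)^[i] b)) :=
      Filter.isBoundedUnder_of ⟨0, fun i => dist_nonneg⟩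
    have hev := Filter.eventually_lt_of_lt_liminf (lt_of_lt_of_le hlt hab) hbdd
    obtain ⟨I₀, hI₀⟩ := Filter.eventually_atTop.mp hev
    refine ⟨I₀, fun i hi => ?_⟩
    by_contra hcon
    push_neg at hcon
    have hagree : ∀ j, j < k → ((shift K)^[i] a) j = ((shift K)^[i] b) j := by
      intro j hj
      rw [shift_iter, shift_iter, add_comm j i]
      exact hcon j hj
    have h1 : dist ((shift K)^[i] a) ((shift K)^[i] b) ≤ ((K:ℝ))⁻¹ ^ k :=
      SymbSp.sdist_le_of_agree hagree
    have h2 := hI₀ i hi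
    linarith
  -- block structure
  have tmono : Monotone t := ht.monotone
  have tle : ∀ i, i ≤ t i := fun i => ht.le_apply
  have inN : ∀ i j, t (2*i) ≤ j → j < t (2*i+1) → j ∈ N := by
    intro i j h1 h2; rw [hrep]; exact ⟨i, h1, h2⟩
  have notN : ∀ i j, t (2*i+1) ≤ j → j < t (2*i+2) → j ∉ N := by
    intro i j h1 h2 hj
    rw [hrep] at hj
    obtain ⟨i', h1', h2'⟩ := hj
    rcases le_or_gt i' i with h | h
    · have := tmono (show 2*i'+1 ≤ 2*i+1 by omega); omega
    · have := tmono (show 2*i+2 ≤ 2*i' by omega); omega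
  have hblkex : ∀ i, i ∈ N → ∃ J, t (2*J) ≤ i ∧ i < t (2*J+1) := by
    intro i hi; rw [hrep] at hi; exact hi
  -- Phi relations
  have hxyN : ∀ i, i ∈ N → Phi N c a i = Phi N c b i := by
    intro i hi; simp only [Phi, if_pos hi]
  have hxNc : ∀ i, i ∉ N → Phi N c a i = a (gammaCount Nᶜ i) := by
    intro i hi; simp only [Phi, if_neg hi]
  have hyNc : ∀ i, i ∉ N → Phi N c b i = b (gammaCount Nᶜ i) := by
    intro i hi; simp only [Phi, if_neg hi]
  -- gammaCount generalities
  have hgc_succ : ∀ (A : Set ℕ) (n : ℕ),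
      gammaCount A (n+1) = gammaCount A n + (if n ∈ A then 1 else 0) := by
    intro A n
    show (A ∩ Set.Iio (n+1)).ncard = (A ∩ Set.Iio n).ncard + _
    rw [ncard_inter_Iio', ncard_inter_Iio', cntA_succ]
  have hgc_mono : ∀ (A : Set ℕ) (u v : ℕ), u ≤ v → gammaCount A u ≤ gammaCount A v := by
    intro A u v h
    show (A ∩ Set.Iio u).ncard ≤ (A ∩ Set.Iio v).ncard
    rw [ncard_inter_Iio', ncard_inter_Iio']
    exact cntA_mono A h
  have hgc_le : ∀ (A : Set ℕ) (n : ℕ), gammaCount A n ≤ n := by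
    intro A n
    show (A ∩ Set.Iio n).ncard ≤ n
    rw [ncard_inter_Iio']
    exact cntA_le A n
  have hgc_consec : ∀ (A : Set ℕ) (u j : ℕ), (∀ i, i < j → u + i ∈ A) →
      gammaCount A (u + j) = gammaCount A u + j := by
    intro A u j h
    induction j with
    | zero => simp
    | succ j ih =>
      have he : u + (j+1) = (u+j)+1 := by omega
      rw [he, hgc_succ, ih (fun i hi => h i (by omega)), if_pos (h j (by omega))]
      omega
  -- unboundedness of gammaCount Nᶜ
  have hgamma_big : ∀ I : ℕ, ∃ T : ℕ, ∀ i, T ≤ i → I ≤ gammaCount Nᶜ i := by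
    intro I
    have h1 : ∀ j, j ≤ gammaCount Nᶜ (t (2*j)) := by
      intro j
      induction j with
      | zero => omega
      | succ j ih =>
        have hmem : t (2*j+1) ∈ Nᶜ := Set.mem_compl (notN j _ le_rfl (ht (by omega)))
        have h2 : gammaCount Nᶜ (t (2*j+1) + 1) = gammaCount Nᶜ (t (2*j+1)) + 1 := by
          rw [hgc_succ, if_pos hmem]
        have hle1 : gammaCount Nᶜ (t (2*j)) ≤ gammaCount Nᶜ (t (2*j+1)) :=
          hgc_mono _ _ _ (tmono (by omega))
        have hle2 : gammaCount Nᶜ (t (2*j+1) + 1) ≤ gammaCount Nᶜ (t (2*(j+1))) :=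
          hgc_mono _ _ _ (by have := ht (show 2*j+1 < 2*(j+1) by omega); omega)
        omega
    exact ⟨t (2*I), fun i hi => le_trans (h1 I) (hgc_mono _ _ _ hi)⟩
  -- step monotonicity of n ↦ ζ_N(n)/n
  have hstep_up : ∀ v : ℕ, v ∈ N →
      (gammaCount N v : ℝ)/(v:ℝ) ≤ (gammaCount N (v+1) : ℝ)/((v+1 : ℕ):ℝ) := by
    intro v hv
    rcases Nat.eq_zero_or_pos v with h0 | h0
    · subst h0; simp
    have hrec : gammaCount N (v+1) = gammaCount N v + 1 := by
      rw [hgc_succ, if_pos hv]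
    have hb : (gammaCount N v : ℝ) ≤ v := by exact_mod_cast hgc_le N v
    rw [hrec]
    rw [div_le_div_iff₀ (by exact_mod_cast h0) (by positivity)]
    push_cast
    nlinarith [hb]
  have hstep_dn : ∀ v : ℕ, v ∉ N →
      (gammaCount N (v+1) : ℝ)/((v+1 : ℕ):ℝ) ≤ (gammaCount N v : ℝ)/(v:ℝ) := by
    intro v hv
    have hrec : gammaCount N (v+1) = gammaCount N v := by
      rw [hgc_succ, if_neg hv]
      omega
    rcases Nat.eq_zero_or_pos v with h0 | h0
    · subst h0
      have h00 : gammaCount N 0 = 0 := by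
        show (N ∩ Set.Iio 0).ncard = 0
        convert Set.ncard_empty ℕ
        ext i
        simp
      rw [hrec, h00]
      norm_num
    rw [hrec]
    apply div_le_div_of_nonneg_left (by positivity) (by exact_mod_cast h0)
    push_cast
    linarith
  have hmonoI : ∀ u v : ℕ, u ≤ v → (∀ j, u ≤ j → j < v → j ∈ N) →
      (gammaCount N u : ℝ)/(u:ℝ) ≤ (gammaCount N v : ℝ)/(v:ℝ) := by
    intro u v
    induction v with
    | zero => intro h _; have : u = 0 := by omega
              subst this; exact le_rfl
    | succ v ih =>
      intro huv h
      rcases Nat.eq_or_lt_of_le huv with he | hlt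
      · rw [he]
      · have h1 : u ≤ v := by omega
        exact le_trans (ih h1 fun j aa bb => h j aa (by omega))
          (hstep_up v (h v h1 (by omega)))
  have hantiI : ∀ u v : ℕ, u ≤ v → (∀ j, u ≤ j → j < v → j ∉ N) →
      (gammaCount N v : ℝ)/(v:ℝ) ≤ (gammaCount N u : ℝ)/(u:ℝ) := by
    intro u v
    induction v with
    | zero => intro h _; have : u = 0 := by omega
              subst this; exact le_rfl
    | succ v ih =>
      intro huv h
      rcases Nat.eq_or_lt_of_le huv with he | hlt
      · rw [he]
      · have h1 : u ≤ v := by omega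
        exact le_trans (hstep_dn v (h v h1 (by omega)))
          (ih h1 fun j aa bb => h j aa (by omega))
  -- eventual bounds for ζ_N(n)/n
  have hto_q' : Filter.Tendsto (fun i : ℕ =>
      (gammaCount N (t (2*i+1)) : ℝ) / (t (2*i+1))) Filter.atTop (nhds q) := hto_q
  have hto_p' : Filter.Tendsto (fun i : ℕ =>
      (gammaCount N (t (2*i+2)) : ℝ) / (t (2*i+2))) Filter.atTop (nhds p) := hto_p
  have hub : ∀ δ : ℝ, 0 < δ → ∀ᶠ n : ℕ in Filter.atTop,
      (gammaCount N n : ℝ)/n ≤ q + δ := by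
    intro δ hδ
    have hev : ∀ᶠ i in Filter.atTop,
        (gammaCount N (t (2*i+1)) : ℝ) / (t (2*i+1)) ≤ q + δ :=
      hto_q'.eventually (eventually_le_nhds (by linarith))
    obtain ⟨I₁, hI₁⟩ := Filter.eventually_atTop.mp hev
    rw [Filter.eventually_atTop]
    refine ⟨t (2*I₁+1), fun n hn => ?_⟩
    have hP0 : t (2*0+1) ≤ n := le_trans (tmono (by omega)) hn
    set i := Nat.findGreatest (fun i => t (2*i+1) ≤ n) n with hidef
    have hi1 : t (2*i+1) ≤ n :=
      Nat.findGreatest_spec (P := fun i => t (2*i+1) ≤ n) (Nat.zero_le n) hP0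
    have hi2 : n < t (2*(i+1)+1) := by
      by_contra hcon
      push_neg at hcon
      exact Nat.findGreatest_is_greatest (P := fun i => t (2*i+1) ≤ n)
        (Nat.lt_succ_self i) (by have := tle (2*(i+1)+1); omega) hcon
    have he1 : 2*(i+1) = 2*i+2 := by ring
    have he2 : 2*(i+1)+1 = 2*i+3 := by ring
    have hiI : I₁ ≤ i := by
      by_contra hcon
      push_neg at hcon
      have := tmono (show 2*(i+1)+1 ≤ 2*I₁+1 by omega)
      omega
    rcases le_or_gt n (t (2*i+2)) with hc | hc
    · calc (gammaCount N n : ℝ)/n ≤ _ :=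
            hantiI (t (2*i+1)) n hi1 (fun j h1 h2 => notN i j h1 (by omega))
        _ ≤ q + δ := hI₁ i hiI
    · have h3 : (gammaCount N n : ℝ)/n ≤ (gammaCount N (t (2*(i+1)+1)) : ℝ)/(t (2*(i+1)+1)) := by
        apply hmonoI n (t (2*(i+1)+1)) (le_of_lt hi2)
        intro j h1 h2
        exact inN (i+1) j (by rw [he1]; omega) h2
      exact le_trans h3 (hI₁ (i+1) (by omega))
  have hlb : ∀ δ : ℝ, 0 < δ → ∀ᶠ n : ℕ in Filter.atTop,
      p - δ ≤ (gammaCount N n : ℝ)/n := by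
    intro δ hδ
    have hev : ∀ᶠ i in Filter.atTop,
        p - δ ≤ (gammaCount N (t (2*i+2)) : ℝ) / (t (2*i+2)) :=
      hto_p'.eventually (eventually_ge_nhds (by linarith))
    obtain ⟨I₂, hI₂⟩ := Filter.eventually_atTop.mp hev
    rw [Filter.eventually_atTop]
    refine ⟨t (2*I₂+2), fun n hn => ?_⟩
    have hP0 : t (2*0+2) ≤ n := le_trans (tmono (by omega)) hn
    set i := Nat.findGreatest (fun i => t (2*i+2) ≤ n) n with hidef
    have hi1 : t (2*i+2) ≤ n :=
      Nat.findGreatest_spec (P := fun i => t (2*i+2) ≤ n) (Nat.zero_le n) hP0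
    have hi2 : n < t (2*(i+1)+2) := by
      by_contra hcon
      push_neg at hcon
      exact Nat.findGreatest_is_greatest (P := fun i => t (2*i+2) ≤ n)
        (Nat.lt_succ_self i) (by have := tle (2*(i+1)+2); omega) hcon
    have he1 : 2*(i+1) = 2*i+2 := by ring
    have he2 : 2*(i+1)+1 = 2*i+3 := by ring
    have hiI : I₂ ≤ i := by
      by_contra hcon
      push_neg at hcon
      have := tmono (show 2*(i+1)+2 ≤ 2*I₂+2 by omega)
      omega
    rcases le_or_gt n (t (2*i+3)) with hc | hc
    · have h3 : (gammaCount N (t (2*i+2)) : ℝ)/(t (2*i+2)) ≤ (gammaCount N n : ℝ)/n := by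
        apply hmonoI (t (2*i+2)) n hi1
        intro j h1 h2
        exact inN (i+1) j (by rw [he1]; omega) (by rw [he2]; omega)
      exact le_trans (hI₂ i hiI) h3
    · have h3 : (gammaCount N (t (2*(i+1)+2)) : ℝ)/(t (2*(i+1)+2)) ≤ (gammaCount N n : ℝ)/n := by
        apply hantiI n (t (2*(i+1)+2)) (le_of_lt hi2)
        intro j h1 h2
        exact notN (i+1) j (by rw [he2]; omega) h2
      exact le_trans (hI₂ (i+1) (by omega)) h3
  -- the block-counting function B
  set B : ℕ → ℕ := fun n => ((Finset.range (n+k)).filter (fun j => t (2*j) < n + k)).card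
    with hBdef
  have hBeq : ∀ n, B n = ((Finset.range (n+k)).filter (fun j => t (2*j) < n + k)).card :=
    fun n => by rw [hBdef]
  clear_value B
  have hBsmall : ∀ δ : ℝ, 0 < δ → ∀ᶠ n : ℕ in Filter.atTop, (B n : ℝ) ≤ δ * n := by
    intro δ hδ
    set L : ℕ := ⌈2/δ⌉₊ + 1 with hLdef
    have hL0 : 0 < L := by omega
    have hL0' : (0:ℝ) < L := by exact_mod_cast hL0
    have hL2 : 2/δ ≤ (L:ℝ) := by
      have := Nat.le_ceil (2/δ)
      have h2 : (⌈2/δ⌉₊ : ℝ) ≤ L := by exact_mod_cast (by omega : ⌈2/δ⌉₊ ≤ L)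
      linarith
    have hLinv : (1:ℝ)/L ≤ δ/2 := by
      rw [div_le_div_iff₀ hL0' (by norm_num)]
      have h3 := mul_le_mul_of_nonneg_left hL2 (le_of_lt hδ)
      rw [mul_div_cancel₀] at h3
      · linarith
      · exact ne_of_gt hδ
    obtain ⟨I, hI⟩ := Filter.eventually_atTop.mp (hd.eventually_ge_atTop L)
    have hIneq : ∀ i, I ≤ i → t i + L ≤ t (i+1) := by
      intro i hi
      have h1 := hI i hi
      have h2 := (ht (Nat.lt_succ_self i)).le
      omega
    have hgrow : ∀ j, L * (2*j) ≤ t (2*I + 2*j) := by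
      intro j
      induction j with
      | zero => omega
      | succ j ih =>
        have h1 := hIneq (2*I + 2*j) (by omega)
        have h2 := hIneq (2*I + 2*j + 1) (by omega)
        have he : 2*I + 2*j + 1 + 1 = 2*I + 2*(j+1) := by ring
        rw [he] at h2
        have he2 : L*(2*(j+1)) = L*(2*j) + 2*L := by ring
        omega
    have hcard : ∀ n : ℕ, B n ≤ I + (n+k)/(2*L) + 1 := by
      intro n
      rw [hBeq]
      calc ((Finset.range (n+k)).filter (fun j => t (2*j) < n + k)).card
          ≤ (Finset.range (I + (n+k)/(2*L) + 1)).card := by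
            apply Finset.card_le_card
            intro j hj
            rw [Finset.mem_filter] at hj
            rw [Finset.mem_range]
            by_contra hcon
            push_neg at hcon
            have hj2 : t (2*j) < n + k := hj.2
            have hg := hgrow (j - I)
            have hjI : I + (n+k)/(2*L) + 1 ≤ j := hcon
            have hjI2 : I + 1 ≤ j :=
              le_trans (Nat.add_le_add_right (Nat.le_add_right I _) 1) hjI
            have he : 2*I + 2*(j-I) = 2*j := by omega
            rw [he] at hg
            have h3 : 2*((n+k)/(2*L)+1) ≤ 2*(j-I) := by
              have h5 := Nat.sub_le_sub_right hjI I
              omega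
            have h4 : L*(2*((n+k)/(2*L)+1)) ≤ L*(2*(j-I)) := Nat.mul_le_mul_left L h3
            have hdm := Nat.div_add_mod (n+k) (2*L)
            have hml : (n+k) % (2*L) < 2*L := Nat.mod_lt _ (by omega)
            have hfinal : n + k < n + k := by
              calc n + k = 2*L*((n+k)/(2*L)) + (n+k) % (2*L) := hdm.symm
                _ < 2*L*((n+k)/(2*L)) + 2*L := Nat.add_lt_add_left hml _
                _ = L*(2*((n+k)/(2*L)+1)) := by ring
                _ ≤ L*(2*(j-I)) := h4
                _ ≤ t (2*j) := hg
                _ < n + k := hj2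
            exact absurd hfinal (lt_irrefl _)
        _ = I + (n+k)/(2*L) + 1 := Finset.card_range _
    have hn1 : ∃ n₁ : ℕ, ∀ n : ℕ, n₁ ≤ n → ((I:ℝ) + 1 + 1) ≤ δ/2 * n := by
      refine ⟨⌈(2*(I+2))/δ⌉₊, fun n hn => ?_⟩
      have h1 : ((2*((I:ℝ)+2))/δ) ≤ n := le_trans (Nat.le_ceil _) (by exact_mod_cast hn)
      rw [div_le_iff₀ hδ] at h1
      nlinarith
    obtain ⟨n₁, hn₁⟩ := hn1
    rw [Filter.eventually_atTop]
    refine ⟨max k (max n₁ 1), fun n hn => ?_⟩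
    have hnk : k ≤ n := le_trans (le_max_left _ _) hn
    have hnn1 : n₁ ≤ n := le_trans (le_trans (le_max_left _ _) (le_max_right _ _)) hn
    have hn0 : (1:ℕ) ≤ n := le_trans (le_trans (le_max_right _ _) (le_max_right _ _)) hn
    have h1 : (B n : ℝ) ≤ (I:ℝ) + ((n+k)/(2*L) : ℕ) + 1 := by exact_mod_cast hcard n
    have h2 : (((n+k)/(2*L) : ℕ) : ℝ) ≤ ((n:ℝ)+k)/(2*L) := by
      have := Nat.cast_div_le (α := ℝ) (m := n+k) (n := 2*L)
      push_cast at this ⊢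
      exact this
    have h3 : ((n:ℝ)+k)/(2*L) ≤ (2*n)/(2*(L:ℝ)) := by
      apply div_le_div_of_nonneg_right ?_ (by positivity)
      · push_cast
        have : (k:ℝ) ≤ n := by exact_mod_cast hnk
        linarith
    have h4 : (2*(n:ℝ))/(2*(L:ℝ)) = n * (1/L) := by
      field_simp
    have h5 : (n:ℝ) * (1/L) ≤ (n:ℝ) * (δ/2) := by
      apply mul_le_mul_of_nonneg_left hLinv (by positivity)
    have h6 := hn₁ n hnn1
    calc (B n : ℝ) ≤ (I:ℝ) + ((n+k)/(2*L) : ℕ) + 1 := h1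
      _ ≤ (I:ℝ) + 1 + 1 + ((n:ℝ)+k)/(2*L) := by linarith
      _ ≤ δ/2 * n + (n:ℝ) * (δ/2) := by
          have := le_trans h3 (le_of_eq h4)
          linarith [le_trans this h5]
      _ = δ * n := by ring
  -- the per-ε core
  have key : ∀ ε : ℝ, 0 < ε → ε ≤ (K : ℝ) ^ (1 - (k:ℤ)) →
      ({r : ℝ | MapClusterPt r Filter.atTop (fun n : ℕ =>
        (({i : ℕ | dist ((shift K)^[i] (Phi N c a)) ((shift K)^[i] (Phi N c b)) < ε} ∩
            Set.Iio n).ncard : ℝ) / n)} = Set.Icc p q) ∧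
      Filter.liminf (fun n : ℕ =>
        ((((Finset.range n).filter fun i : ℕ =>
          dist ((shift K)^[i] (Phi N c a)) ((shift K)^[i] (Phi N c b)) < ε).card : ℝ) / n))
        Filter.atTop = p ∧
      Filter.limsup (fun n : ℕ =>
        ((((Finset.range n).filter fun i : ℕ =>
          dist ((shift K)^[i] (Phi N c a)) ((shift K)^[i] (Phi N c b)) < ε).card : ℝ) / n))
        Filter.atTop = q := by
    intro ε hε hεle
    -- the agreement length m
    obtain ⟨m, hm1, hm2⟩ : ∃ m : ℕ, ((K:ℝ))⁻¹ ^ m < ε ∧ ∀ j, j < m → ε ≤ ((K:ℝ))⁻¹ ^ j := by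
      have hexm : ∃ m : ℕ, ((K:ℝ))⁻¹ ^ m < ε := exists_pow_lt_of_lt_one hε hKinv1
      exact ⟨Nat.find hexm, Nat.find_spec hexm,
        fun j hj => le_of_not_gt (Nat.find_min hexm hj)⟩
    have hkm : k ≤ m := by
      by_contra hcon
      push_neg at hcon
      have h1 : ((K:ℝ))⁻¹ ^ (k-1) ≤ ((K:ℝ))⁻¹ ^ m :=
        pow_le_pow_of_le_one hKinv0.le hKinv1.le (by omega)
      rw [hzpow] at hεle
      linarith
    set S : Set ℕ := {i : ℕ | dist ((shift K)^[i] (Phi N c a)) ((shift K)^[i] (Phi N c b)) < ε}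
      with hSdef
    clear_value S
    have hSiff : ∀ i : ℕ, i ∈ S ↔ ∀ j, j < m → Phi N c a (j + i) = Phi N c b (j + i) := by
      intro i
      rw [hSdef, Set.mem_setOf_eq, symb_dist_lt_iff hm1 hm2]
      constructor
      · intro h j hj
        have := h j hj
        rwa [shift_iter, shift_iter] at this
      · intro h j hj
        rw [shift_iter, shift_iter]
        exact h j hj
    have hin_S : ∀ J i, t (2*J) ≤ i → i + m ≤ t (2*J+1) → i ∈ S := by
      intro J i h1 h2
      rw [hSiff]
      intro j hj
      exact hxyN _ (inN J (j+i) (by omega) (by omega))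
    obtain ⟨I₀, hI₀⟩ := hdistal
    obtain ⟨T, hT⟩ := hgamma_big I₀
    have hrun : ∀ i, T ≤ i → (∀ j, j < k → i + j ∉ N) → i ∉ S := by
      intro i hTi hjs hiS
      rw [hSiff] at hiS
      obtain ⟨j, hjk, hne⟩ := hI₀ (gammaCount Nᶜ i) (hT i hTi)
      have hcons : gammaCount Nᶜ (i + j) = gammaCount Nᶜ i + j :=
        hgc_consec Nᶜ i j (fun l hl => Set.mem_compl (hjs l (by omega)))
      have hxv := hxNc (i+j) (hjs j hjk)
      have hyv := hyNc (i+j) (hjs j hjk)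
      have hagree := hiS j (by omega)
      rw [add_comm j i] at hagree
      rw [hxv, hyv, hcons] at hagree
      exact hne hagree
    -- the block picker
    set blk : ℕ → ℕ := fun i =>
      if h : ∃ J, t (2*J) ≤ i ∧ i < t (2*J+1) then h.choose else 0 with hblkdef
    have hblk : ∀ i, i ∈ N → t (2 * blk i) ≤ i ∧ i < t (2 * blk i + 1) := by
      intro i hi
      have h := hblkex i hi
      simp only [hblkdef, dif_pos h]
      exact h.choose_spec
    clear_value blk
    -- counting
    set ζS : ℕ → ℕ := fun n => ((Finset.range n).filter (· ∈ S)).card with hζSdef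
    have hζS_eq : ∀ n, ζS n = ((Finset.range n).filter (· ∈ S)).card := fun n => by
      rw [hζSdef]
    clear_value ζS
    have hgcN_fin : ∀ n : ℕ, gammaCount N n = ((Finset.range n).filter (· ∈ N)).card := by
      intro n
      show (N ∩ Set.Iio n).ncard = _
      exact ncard_inter_Iio' N n
    have hclaimA : ∀ n : ℕ, gammaCount N n ≤ ζS n + B n * m := by
      intro n
      have hsplit := Finset.card_filter_add_card_filter_not
        (s := (Finset.range n).filter (· ∈ N)) (p := (· ∈ S))
      have h1 : (((Finset.range n).filter (· ∈ N)).filter (· ∈ S)).card ≤ ζS n := by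
        rw [hζS_eq]
        apply Finset.card_le_card
        intro i hi
        simp only [Finset.mem_filter, Finset.mem_range] at hi ⊢
        exact ⟨hi.1.1, hi.2⟩
      have h2 : (((Finset.range n).filter (· ∈ N)).filter (fun i => ¬ i ∈ S)).card
          ≤ B n * m := by
        have hmaps : ∀ i ∈ ((Finset.range n).filter (· ∈ N)).filter (fun i => ¬ i ∈ S),
            (blk i, t (2 * blk i + 1) - 1 - i) ∈
            (((Finset.range (n+k)).filter (fun j => t (2*j) < n + k)) ×ˢ Finset.range m) := by
          intro i hi
          simp only [Finset.mem_filter, Finset.mem_range] at hi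
          obtain ⟨⟨hin, hiN⟩, hiS⟩ := hi
          obtain ⟨hb1, hb2⟩ := hblk i hiN
          have hnf : ¬ (i + m ≤ t (2*blk i + 1)) := fun hh => hiS (hin_S (blk i) i hb1 hh)
          push_neg at hnf
          have hjb := tle (2 * blk i)
          simp only [Finset.mem_product, Finset.mem_filter, Finset.mem_range]
          exact ⟨⟨by omega, by omega⟩, by omega⟩
        have hinj : Set.InjOn (fun i => (blk i, t (2 * blk i + 1) - 1 - i))
            ↑(((Finset.range n).filter (· ∈ N)).filter (fun i => ¬ i ∈ S)) := by
          intro i₁ h₁ i₂ h₂ heq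
          rw [Finset.mem_coe, Finset.mem_filter, Finset.mem_filter] at h₁ h₂
          obtain ⟨hb1, hb2⟩ := hblk i₁ h₁.1.2
          obtain ⟨hb3, hb4⟩ := hblk i₂ h₂.1.2
          have he1 : blk i₁ = blk i₂ := congrArg Prod.fst heq
          have he2 : t (2 * blk i₁ + 1) - 1 - i₁ = t (2 * blk i₂ + 1) - 1 - i₂ :=
            congrArg Prod.snd heq
          rw [he1] at hb2 he2
          omega
        calc (((Finset.range n).filter (· ∈ N)).filter (fun i => ¬ i ∈ S)).card
            ≤ (((Finset.range (n+k)).filter (fun j => t (2*j) < n + k)) ×ˢ Finset.range m).card :=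
              Finset.card_le_card_of_injOn _ hmaps hinj
          _ = B n * m := by rw [Finset.card_product, Finset.card_range, hBeq]
      rw [hgcN_fin]
      omega
    -- picker of a nearby element of N
    set nj : ℕ → ℕ := fun i => if h : ∃ j, j < k ∧ i + j ∈ N then h.choose else 0 with hnjdef
    have hnj : ∀ i, (∃ j, j < k ∧ i + j ∈ N) → nj i < k ∧ i + nj i ∈ N := by
      intro i h
      simp only [hnjdef, dif_pos h]
      exact h.choose_spec
    clear_value nj
    have hclaimB : ∀ n : ℕ, ζS n ≤ gammaCount N n + (B n * k + T) := by
      intro n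
      have hsplit := Finset.card_filter_add_card_filter_not
        (s := (Finset.range n).filter (· ∈ S)) (p := (· ∈ N))
      have h1 : (((Finset.range n).filter (· ∈ S)).filter (· ∈ N)).card ≤ gammaCount N n := by
        rw [hgcN_fin]
        apply Finset.card_le_card
        intro i hi
        simp only [Finset.mem_filter, Finset.mem_range] at hi ⊢
        exact ⟨hi.1.1, hi.2⟩
      have hsplit2 := Finset.card_filter_add_card_filter_not
        (s := ((Finset.range n).filter (· ∈ S)).filter (fun i => ¬ i ∈ N))
        (p := (fun i => i < T))
      have h2 : ((((Finset.range n).filter (· ∈ S)).filter (fun i => ¬ i ∈ N)).filter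
          (fun i => i < T)).card ≤ T := by
        calc ((((Finset.range n).filter (· ∈ S)).filter (fun i => ¬ i ∈ N)).filter
            (fun i => i < T)).card ≤ (Finset.range T).card := by
              apply Finset.card_le_card
              intro i hi
              simp only [Finset.mem_filter, Finset.mem_range] at hi ⊢
              exact hi.2
          _ = T := Finset.card_range T
      have hprop : ∀ i ∈ (((Finset.range n).filter (· ∈ S)).filter (fun i => ¬ i ∈ N)).filter
          (fun i => ¬ i < T),
          i < t (2 * blk (i + nj i)) ∧ t (2 * blk (i + nj i)) ≤ i + nj i ∧ nj i < k ∧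
            i + nj i < t (2 * blk (i + nj i) + 1) ∧ i < n := by
        intro i hi
        simp only [Finset.mem_filter, Finset.mem_range] at hi
        obtain ⟨⟨⟨hin, hiS⟩, hiN⟩, hiT⟩ := hi
        have hex : ∃ j, j < k ∧ i + j ∈ N := by
          by_contra hcon
          push_neg at hcon
          exact (hrun i (by omega) (fun j hj => hcon j hj)) hiS
        obtain ⟨hn1, hn2⟩ := hnj i hex
        obtain ⟨hb1, hb2⟩ := hblk _ hn2
        have hlt : i < t (2 * blk (i + nj i)) := by
          by_contra hcon
          push_neg at hcon
          exact hiN (inN (blk (i + nj i)) i hcon (by omega))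
        exact ⟨hlt, hb1, hn1, hb2, hin⟩
      have h3 : ((((Finset.range n).filter (· ∈ S)).filter (fun i => ¬ i ∈ N)).filter
          (fun i => ¬ i < T)).card ≤ B n * k := by
        have hmaps : ∀ i ∈ (((Finset.range n).filter (· ∈ S)).filter (fun i => ¬ i ∈ N)).filter
            (fun i => ¬ i < T),
            (blk (i + nj i), t (2 * blk (i + nj i)) - 1 - i) ∈
            (((Finset.range (n+k)).filter (fun j => t (2*j) < n + k)) ×ˢ Finset.range k) := by
          intro i hi
          obtain ⟨hp1, hp2, hp3, hp4, hp5⟩ := hprop i hi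
          have hjb := tle (2 * blk (i + nj i))
          simp only [Finset.mem_product, Finset.mem_filter, Finset.mem_range]
          exact ⟨⟨by omega, by omega⟩, by omega⟩
        have hinj : Set.InjOn (fun i => (blk (i + nj i), t (2 * blk (i + nj i)) - 1 - i))
            ↑((((Finset.range n).filter (· ∈ S)).filter (fun i => ¬ i ∈ N)).filter
              (fun i => ¬ i < T)) := by
          intro i₁ h₁ i₂ h₂ heq
          obtain ⟨hq1, hq2, hq3, hq4, hq5⟩ := hprop i₁ (Finset.mem_coe.mp h₁)
          obtain ⟨hr1, hr2, hr3, hr4, hr5⟩ := hprop i₂ (Finset.mem_coe.mp h₂)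
          have he1 : blk (i₁ + nj i₁) = blk (i₂ + nj i₂) := congrArg Prod.fst heq
          have he2 : t (2 * blk (i₁ + nj i₁)) - 1 - i₁ = t (2 * blk (i₂ + nj i₂)) - 1 - i₂ :=
            congrArg Prod.snd heq
          rw [he1] at hq1 he2
          omega
        calc ((((Finset.range n).filter (· ∈ S)).filter (fun i => ¬ i ∈ N)).filter
            (fun i => ¬ i < T)).card
            ≤ (((Finset.range (n+k)).filter (fun j => t (2*j) < n + k)) ×ˢ Finset.range k).card :=
              Finset.card_le_card_of_injOn _ hmaps hinj
          _ = B n * k := by rw [Finset.card_product, Finset.card_range, hBeq]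
      have hζ := hζS_eq n
      omega
    -- closeness of the two density functions
    have hζS_le : ∀ n : ℕ, ζS n ≤ n := fun n => by rw [hζS_eq]; exact cntA_le S n
    have hfclose : ∀ δ : ℝ, 0 < δ → ∀ᶠ n : ℕ in Filter.atTop,
        |(ζS n : ℝ)/n - (gammaCount N n : ℝ)/n| ≤ δ := by
      intro δ hδ
      have hδ1 : (0:ℝ) < δ/(2*((m:ℝ)+k+1)) := by positivity
      obtain ⟨n₂, hn₂⟩ : ∃ n₂ : ℕ, ∀ n : ℕ, n₂ ≤ n → (T:ℝ) ≤ δ/4 * n := by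
        refine ⟨⌈(4*((T:ℝ)+1))/δ⌉₊, fun n hn => ?_⟩
        have h1 : (4*((T:ℝ)+1))/δ ≤ n := le_trans (Nat.le_ceil _) (by exact_mod_cast hn)
        rw [div_le_iff₀ hδ] at h1
        nlinarith
      filter_upwards [hBsmall _ hδ1, Filter.eventually_ge_atTop (max 1 n₂)] with n hB1 hn1
      have h1n : 1 ≤ n := le_trans (le_max_left _ _) hn1
      have hn2' : n₂ ≤ n := le_trans (le_max_right _ _) hn1
      have hn0 : (0:ℝ) < n := by exact_mod_cast h1n
      have hA := hclaimA n
      have hBB := hclaimB n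
      have hBnn : (0:ℝ) ≤ (B n : ℝ) := Nat.cast_nonneg _
      have habs : |(ζS n:ℝ) - (gammaCount N n:ℝ)| ≤ ((m:ℝ)+k)*(B n) + T := by
        have hA' : (gammaCount N n : ℝ) ≤ (ζS n : ℝ) + (B n : ℝ) * m := by exact_mod_cast hA
        have hB' : (ζS n : ℝ) ≤ (gammaCount N n : ℝ) + ((B n : ℝ) * k + T) := by
          exact_mod_cast hBB
        have hT0 : (0:ℝ) ≤ (T:ℝ) := by positivity
        have hk0 : (0:ℝ) ≤ (k:ℝ) := by positivity
        have hm0 : (0:ℝ) ≤ (m:ℝ) := by positivity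
        have he1 : ((m:ℝ)+k)*(B n) = (B n:ℝ)*m + (k:ℝ)*(B n) := by ring
        have he2 : ((m:ℝ)+k)*(B n) = (B n:ℝ)*k + (m:ℝ)*(B n) := by ring
        have hkB : (0:ℝ) ≤ (k:ℝ)*(B n) := by positivity
        have hmB : (0:ℝ) ≤ (m:ℝ)*(B n) := by positivity
        rw [abs_le]
        constructor
        · linarith [hA', he1, hkB, hT0]
        · linarith [hB', he2, hmB, hT0]
      have hfrac : ((m:ℝ)+k) * (δ/(2*((m:ℝ)+k+1))) ≤ δ/2 := by
        rw [← mul_div_assoc, div_le_div_iff₀ (by positivity) (by norm_num : (0:ℝ) < 2)]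
        nlinarith [hδ.le]
      have hchain : |(ζS n:ℝ) - (gammaCount N n:ℝ)| ≤ δ * n := by
        have h2 : ((m:ℝ)+k)*(B n) ≤ ((m:ℝ)+k)*(δ/(2*((m:ℝ)+k+1)) * n) := by
          apply mul_le_mul_of_nonneg_left hB1 (by positivity)
        have h3 : ((m:ℝ)+k)*(δ/(2*((m:ℝ)+k+1)) * n) = (((m:ℝ)+k)*(δ/(2*((m:ℝ)+k+1))))*n := by
          ring
        have h4 : (((m:ℝ)+k)*(δ/(2*((m:ℝ)+k+1))))*n ≤ δ/2*n :=
          mul_le_mul_of_nonneg_right hfrac hn0.le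
        have h5 := hn₂ n hn2'
        have h6 : (0:ℝ) ≤ δ * n := by positivity
        calc |(ζS n:ℝ) - (gammaCount N n:ℝ)| ≤ ((m:ℝ)+k)*(B n) + T := habs
          _ ≤ δ/2*n + δ/4*n := by linarith
          _ ≤ δ * n := by nlinarith
      rw [div_sub_div_same, abs_div, abs_of_pos hn0, div_le_iff₀ hn0]
      linarith [hchain]
    -- eventual bounds for the S-density
    have hubS : ∀ δ : ℝ, 0 < δ → ∀ᶠ n : ℕ in Filter.atTop, (ζS n:ℝ)/n ≤ q + δ := by
      intro δ hδ
      filter_upwards [hub (δ/2) (by linarith), hfclose (δ/2) (by linarith)] with n h1 h2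
      have h3 := abs_le.mp h2
      linarith [h3.1, h3.2]
    have hlbS : ∀ δ : ℝ, 0 < δ → ∀ᶠ n : ℕ in Filter.atTop, p - δ ≤ (ζS n:ℝ)/n := by
      intro δ hδ
      filter_upwards [hlb (δ/2) (by linarith), hfclose (δ/2) (by linarith)] with n h1 h2
      have h3 := abs_le.mp h2
      linarith [h3.1, h3.2]
    -- subsequence limits for the S-density
    have hu1 : Filter.Tendsto (fun i : ℕ => t (2*i+1)) Filter.atTop Filter.atTop :=
      Filter.tendsto_atTop_mono (fun i => le_trans (show i ≤ 2*i+1 by omega) (tle (2*i+1))) Filter.tendsto_id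
    have hu2 : Filter.Tendsto (fun i : ℕ => t (2*i+2)) Filter.atTop Filter.atTop :=
      Filter.tendsto_atTop_mono (fun i => le_trans (show i ≤ 2*i+2 by omega) (tle (2*i+2))) Filter.tendsto_id
    have hgq : Filter.Tendsto (fun i : ℕ => (ζS (t (2*i+1)) : ℝ)/(t (2*i+1)))
        Filter.atTop (nhds q) := by
      rw [Metric.tendsto_atTop]
      intro δ hδ
      obtain ⟨I₁, hI₁⟩ := Metric.tendsto_atTop.mp hto_q' (δ/2) (by linarith)
      obtain ⟨n₂, hn₂⟩ := Filter.eventually_atTop.mp (hfclose (δ/4) (by linarith))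
      refine ⟨max I₁ n₂, fun i hi => ?_⟩
      have hd1 := hI₁ i (le_trans (le_max_left _ _) hi)
      have hd2 := hn₂ (t (2*i+1))
        (le_trans (le_trans (le_max_right _ _) hi) (le_trans (by omega) (tle (2*i+1))))
      rw [Real.dist_eq] at hd1 ⊢
      have h3 := abs_sub_le ((ζS (t (2*i+1)):ℝ)/(t (2*i+1)))
        ((gammaCount N (t (2*i+1)):ℝ)/(t (2*i+1))) q
      linarith [h3, hd2, hd1]
    have hgp : Filter.Tendsto (fun i : ℕ => (ζS (t (2*i+2)) : ℝ)/(t (2*i+2)))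
        Filter.atTop (nhds p) := by
      rw [Metric.tendsto_atTop]
      intro δ hδ
      obtain ⟨I₁, hI₁⟩ := Metric.tendsto_atTop.mp hto_p' (δ/2) (by linarith)
      obtain ⟨n₂, hn₂⟩ := Filter.eventually_atTop.mp (hfclose (δ/4) (by linarith))
      refine ⟨max I₁ n₂, fun i hi => ?_⟩
      have hd1 := hI₁ i (le_trans (le_max_left _ _) hi)
      have hd2 := hn₂ (t (2*i+2))
        (le_trans (le_trans (le_max_right _ _) hi) (le_trans (by omega) (tle (2*i+2))))
      rw [Real.dist_eq] at hd1 ⊢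
      have h3 := abs_sub_le ((ζS (t (2*i+2)):ℝ)/(t (2*i+2)))
        ((gammaCount N (t (2*i+2)):ℝ)/(t (2*i+2))) p
      linarith [h3, hd2, hd1]
    -- the small-step property
    have hζSrec : ∀ n : ℕ, ζS (n+1) = ζS n + (if n ∈ S then 1 else 0) := fun n => by
      rw [hζS_eq, hζS_eq]
      exact cntA_succ S n
    have hstepS : ∀ δ : ℝ, 0 < δ → ∀ᶠ n : ℕ in Filter.atTop,
        |(ζS (n+1):ℝ)/((n+1 : ℕ):ℝ) - (ζS n:ℝ)/n| ≤ δ := by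
      intro δ hδ
      obtain ⟨M, hM⟩ : ∃ M : ℕ, ∀ n : ℕ, M ≤ n → (1:ℝ)/n ≤ δ := by
        obtain ⟨M, hM⟩ := exists_nat_ge (1/δ)
        refine ⟨M+1, fun n hn => ?_⟩
        have h0 : (0:ℝ) < n := by exact_mod_cast (show 0 < n by omega)
        have h1 : (1:ℝ)/δ ≤ n := le_trans hM (by exact_mod_cast (by omega : M ≤ n))
        rw [div_le_iff₀ hδ] at h1
        rw [div_le_iff₀ h0]
        linarith
      filter_upwards [Filter.eventually_ge_atTop (max 1 M)] with n hn
      have h1n : 1 ≤ n := le_trans (le_max_left _ _) hn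
      have hn0 : (0:ℝ) < n := by exact_mod_cast h1n
      have hzb : (ζS n:ℝ) ≤ n := by exact_mod_cast hζS_le n
      have hzb0 : (0:ℝ) ≤ (ζS n:ℝ) := Nat.cast_nonneg _
      have hkey : |(ζS (n+1):ℝ)/((n+1 : ℕ):ℝ) - (ζS n:ℝ)/n| ≤ 1/n := by
        rw [hζSrec n]
        by_cases hnS : n ∈ S
        · rw [if_pos hnS]
          push_cast
          have hid : ((ζS n:ℝ)+1)/((n:ℝ)+1) - (ζS n:ℝ)/n = ((n:ℝ) - ζS n)/((n:ℝ)*((n:ℝ)+1)) := by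
            field_simp
            ring
          rw [hid, abs_div, abs_of_nonneg (by linarith), abs_of_pos (by positivity),
            div_le_div_iff₀ (by positivity) hn0]
          nlinarith
        · rw [if_neg hnS]
          push_cast
          have hid : ((ζS n:ℝ)+0)/((n:ℝ)+1) - (ζS n:ℝ)/n = -((ζS n:ℝ))/((n:ℝ)*((n:ℝ)+1)) := by
            field_simp
            ring
          rw [hid, abs_div, abs_neg, abs_of_nonneg hzb0, abs_of_pos (by positivity),
            div_le_div_iff₀ (by positivity) hn0]
          nlinarith
      exact le_trans hkey (hM n (le_trans (le_max_right _ _) hn))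
    -- cluster point machinery
    have hclq : MapClusterPt q Filter.atTop (fun n : ℕ => (ζS n:ℝ)/n) :=
      mapClusterPt_of_subseq hu1 hgq
    have hclp : MapClusterPt p Filter.atTop (fun n : ℕ => (ζS n:ℝ)/n) :=
      mapClusterPt_of_subseq hu2 hgp
    have hmid : ∀ r, p < r → r < q → MapClusterPt r Filter.atTop (fun n : ℕ => (ζS n:ℝ)/n) := by
      intro r h1 h2
      apply cluster_of_cross hstepS
      · have := mapClusterPt_atTop_iff_freq.mp hclp (r - p) (by linarith)
        exact this.mono fun n hn => by rw [abs_sub_lt_iff] at hn; linarith [hn.1]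
      · have := mapClusterPt_atTop_iff_freq.mp hclq (q - r) (by linarith)
        exact this.mono fun n hn => by rw [abs_sub_lt_iff] at hn; linarith [hn.2]
    have hseteq : {r : ℝ | MapClusterPt r Filter.atTop (fun n : ℕ => (ζS n:ℝ)/n)}
        = Set.Icc p q := by
      ext r
      simp only [Set.mem_setOf_eq]
      constructor
      · exact fun hr => cluster_mem_Icc hubS hlbS hr
      · rintro ⟨hr1, hr2⟩
        rcases eq_or_lt_of_le hr1 with he | h1
        · rw [← he]; exact hclp
        rcases eq_or_lt_of_le hr2 with he | h2
        · rw [he]; exact hclq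
        exact hmid r h1 h2
    -- boundedness
    have hg01 : ∀ n : ℕ, 0 ≤ (ζS n:ℝ)/n ∧ (ζS n:ℝ)/n ≤ 1 := by
      intro n
      constructor
      · exact div_nonneg (Nat.cast_nonneg _) (Nat.cast_nonneg _)
      · rcases Nat.eq_zero_or_pos n with h0 | h0
        · subst h0; norm_num
        · rw [div_le_one (by exact_mod_cast h0)]
          exact_mod_cast hζS_le n
    have hbdd_le : Filter.IsBoundedUnder (· ≤ ·) Filter.atTop (fun n : ℕ => (ζS n:ℝ)/n) :=
      Filter.isBoundedUnder_of ⟨1, fun n => (hg01 n).2⟩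
    have hbdd_ge : Filter.IsBoundedUnder (· ≥ ·) Filter.atTop (fun n : ℕ => (ζS n:ℝ)/n) :=
      Filter.isBoundedUnder_of ⟨0, fun n => (hg01 n).1⟩
    have hliminf : Filter.liminf (fun n : ℕ => (ζS n:ℝ)/n) Filter.atTop = p := by
      apply le_antisymm
      · apply le_of_forall_pos_le_add
        intro δ hδ
        apply Filter.liminf_le_of_frequently_le ?_ hbdd_ge
        have := mapClusterPt_atTop_iff_freq.mp hclp δ hδ
        exact this.mono fun n hn => by rw [abs_sub_lt_iff] at hn; linarith [hn.1]
      · by_contra hcon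
        push_neg at hcon
        have hδ : 0 < (p - Filter.liminf (fun n : ℕ => (ζS n:ℝ)/n) Filter.atTop)/2 := by
          linarith
        have h1 : p - (p - Filter.liminf (fun n : ℕ => (ζS n:ℝ)/n) Filter.atTop)/2 ≤
            Filter.liminf (fun n : ℕ => (ζS n:ℝ)/n) Filter.atTop :=
          Filter.le_liminf_of_le (hbdd_le.isCoboundedUnder_ge) (hlbS _ hδ)
        linarith
    have hlimsup : Filter.limsup (fun n : ℕ => (ζS n:ℝ)/n) Filter.atTop = q := by
      apply le_antisymm
      · by_contra hcon
        push_neg at hcon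
        have hδ : 0 < (Filter.limsup (fun n : ℕ => (ζS n:ℝ)/n) Filter.atTop - q)/2 := by
          linarith
        have h1 : Filter.limsup (fun n : ℕ => (ζS n:ℝ)/n) Filter.atTop ≤
            q + (Filter.limsup (fun n : ℕ => (ζS n:ℝ)/n) Filter.atTop - q)/2 :=
          Filter.limsup_le_of_le (hbdd_ge.isCoboundedUnder_le) (hubS _ hδ)
        linarith
      · apply le_of_forall_pos_le_add
        intro δ hδ
        have hfr : ∃ᶠ n in Filter.atTop, q - δ ≤ (ζS n:ℝ)/n := by
          have := mapClusterPt_atTop_iff_freq.mp hclq δ hδ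
          exact this.mono fun n hn => by rw [abs_sub_lt_iff] at hn; linarith [hn.2]
        have h2 : q - δ ≤ Filter.limsup (fun n : ℕ => (ζS n:ℝ)/n) Filter.atTop :=
          Filter.le_limsup_of_frequently_le hfr hbdd_le
        linarith
    -- final conversions
    have hfun1 : (fun n : ℕ => ((S ∩ Set.Iio n).ncard : ℝ)/(n:ℝ))
        = (fun n : ℕ => (ζS n:ℝ)/n) := by
      funext n
      rw [ncard_inter_Iio', hζS_eq]
    have hfun2 : (fun n : ℕ =>
        ((((Finset.range n).filter fun i : ℕ =>
          dist ((shift K)^[i] (Phi N c a)) ((shift K)^[i] (Phi N c b)) < ε).card : ℝ) / (n:ℝ)))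
        = (fun n : ℕ => (ζS n:ℝ)/n) := by
      funext n
      rw [hζS_eq]
      congr 2
      apply congrArg Finset.card
      apply Finset.filter_congr
      intro i _
      simp only [hSdef, Set.mem_setOf_eq]
    refine ⟨?_, ?_, ?_⟩
    · rw [hfun1]
      exact hseteq
    · rw [hfun2]
      exact hliminf
    · rw [hfun2]
      exact hlimsup
  constructor
  · intro ε h1 h2
    exact (key ε h1 h2).1
  · refine ⟨(K : ℝ) ^ (1 - (k:ℤ)), zpow_pos hK0 _, fun ε h1 h2 => ?_⟩
    exact ⟨(key ε h1 h2).2.1, (key ε h1 h2).2.2⟩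

end
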